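/- Let a₁, a₂, a₃ be positive integers with gcd(a₁,a₂,a₃)=1, d₁ = gcd(a₂,a₃), and suppose a₂/d₁ divides a₁. Then the number of representations of g(a₂/d₁, a₃/d₁; s) as a non-negative combination of a₁, a₂/d₁, a₃/d₁ equals Σ_{j=0}^{s} ⌈ j·a₂a₃ / (a₁d₁²) ⌉. -/

import Mathlib

/-- `d3 a b c n` is the number of triples `(x,y,z)` of non-negative integers
with `a*x + b*y + c*z = n`. -/
noncomputable def d3 (a b c : ℕ) (n : ℤ) : ℕ :=
  Nat.card {p : ℕ × ℕ × ℕ // (a : ℤ) * p.1 + (b : ℤ) * p.2.1 + (c : ℤ) * p.2.2 = n}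

lemma ceil_nat_div (a m : ℕ) (hm : 0 < m) :
    ⌈(a : ℚ) / m⌉ = ((a + m - 1) / m : ℕ) := by
  have hm' : (0:ℚ) < m := by exact_mod_cast hm
  have hqr := Nat.div_add_mod (a + m - 1) m
  have hr : (a + m - 1) % m < m := Nat.mod_lt _ hm
  set q := (a + m - 1) / m with hq
  have h1 : a ≤ m * q := by omega
  have h2 : m * q < a + m := by omega
  have h1' : (a : ℚ) ≤ m * q := by exact_mod_cast h1
  have h2' : ((m : ℚ) * q) < a + m := by exact_mod_cast h2
  rw [Int.ceil_eq_iff]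
  constructor
  · push_cast
    rw [lt_div_iff₀ hm']
    nlinarith
  · rw [div_le_iff₀ hm']
    push_cast
    nlinarith

lemma count_box (m c s : ℕ) (hm : 0 < m) (hc : 0 < c) :
    Nat.card {q : ℕ × ℕ // m * q.1 + c * q.2 + 1 ≤ s * c} =
      ∑ j ∈ Finset.range (s + 1), ((j * c + m - 1) / m) := by
  classical
  set F : Finset (ℕ × ℕ) :=
    (Finset.range (s * c) ×ˢ Finset.range s).filter
      (fun q => m * q.1 + c * q.2 + 1 ≤ s * c) with hF
  have hset : {q : ℕ × ℕ | m * q.1 + c * q.2 + 1 ≤ s * c} = ↑F := by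
    ext ⟨x, t⟩
    simp only [hF, Set.mem_setOf_eq, Finset.coe_filter, Finset.mem_product,
      Finset.mem_range, Set.mem_setOf_eq]
    constructor
    · intro h
      have h1 : x ≤ m * x := Nat.le_mul_of_pos_left x hm
      have h2 : t * c ≤ c * t := by rw [mul_comm]
      rcases le_or_gt s t with hst | hst
      · exfalso
        have : s * c ≤ t * c := Nat.mul_le_mul_right c hst
        omega
      · omega
    · tauto
  have hcard : Nat.card {q : ℕ × ℕ // m * q.1 + c * q.2 + 1 ≤ s * c} = F.card := by
    show Nat.card ↥{q : ℕ × ℕ | m * q.1 + c * q.2 + 1 ≤ s * c} = F.card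
    rw [hset, Nat.card_coe_set_eq, Set.ncard_coe_finset]
  rw [hcard]
  have hfib : F.card = ∑ t ∈ Finset.range s, (F.filter (fun q => q.2 = t)).card := by
    apply Finset.card_eq_sum_card_fiberwise
    intro q hq
    replace hq : q ∈ F := hq
    simp only [hF, Finset.mem_filter, Finset.mem_product, Finset.mem_range] at hq
    simpa using hq.1.2
  rw [hfib]
  have hterm : ∀ t ∈ Finset.range s,
      (F.filter (fun q => q.2 = t)).card = (s * c - c * t - 1) / m + 1 := by
    intro t ht
    rw [Finset.mem_range] at ht
    have h5 : (t + 1) * c ≤ s * c := Nat.mul_le_mul_right c ht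
    have h4 : (t + 1) * c = t * c + c := by ring
    have h2 : t * c = c * t := mul_comm _ _
    have himg : F.filter (fun q => q.2 = t) =
        (Finset.range ((s * c - c * t - 1) / m + 1)) ×ˢ ({t} : Finset ℕ) := by
      ext ⟨x, t'⟩
      simp only [hF, Finset.mem_filter, Finset.mem_product, Finset.mem_range,
        Finset.mem_singleton]
      have hx : x < (s * c - c * t - 1) / m + 1 ↔ m * x ≤ s * c - c * t - 1 := by
        rw [Nat.lt_succ_iff, Nat.le_div_iff_mul_le hm, mul_comm]
      have h1 : x ≤ m * x := Nat.le_mul_of_pos_left x hm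
      constructor
      · rintro ⟨⟨⟨hx1, ht'⟩, hle⟩, heq⟩
        rw [heq] at hle
        exact ⟨hx.mpr (by omega), heq⟩
      · rintro ⟨hxN, heq⟩
        rw [hx] at hxN
        rw [heq]
        exact ⟨⟨⟨by omega, ht⟩, by omega⟩, rfl⟩
    rw [himg, Finset.card_product, Finset.card_range, Finset.card_singleton, mul_one]
  rw [Finset.sum_congr rfl hterm]
  rw [Finset.sum_range_succ']
  have h0 : (0 * c + m - 1) / m = 0 := Nat.div_eq_of_lt (by omega)
  rw [h0, add_zero, ← Finset.sum_range_reflect]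
  apply Finset.sum_congr rfl
  intro t ht
  rw [Finset.mem_range] at ht
  have h5 : (t + 1) * c ≤ s * c := Nat.mul_le_mul_right c ht
  have h6 : 0 < (t + 1) * c := by positivity
  have e0 : s - 1 - t = s - (t + 1) := by omega
  have e1 : c * (s - 1 - t) = s * c - (t + 1) * c := by
    rw [mul_comm, e0, Nat.sub_mul]
  rw [e1]
  have harg1 : s * c - (s * c - (t + 1) * c) - 1 = (t + 1) * c - 1 := by omega
  have harg2 : (t + 1) * c + m - 1 = ((t + 1) * c - 1) + m := by omega
  rw [harg1, harg2, Nat.add_div_right _ hm]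

lemma helper (b c m s x y z : ℕ) (hb : 0 < b) (hbc : Nat.Coprime b c)
    (h : ((b * m : ℕ) : ℤ) * x + (b : ℤ) * y + (c : ℤ) * z =
      ((s : ℤ) + 1) * b * c - b - c) :
    ∃ t : ℕ, z + 1 = b * (t + 1) ∧ m * x + c * t + 1 + y = s * c := by
  have hco : IsCoprime (b : ℤ) (c : ℤ) := Nat.isCoprime_iff_coprime.mpr hbc
  have hdvd : (b : ℤ) ∣ (c : ℤ) * ((z : ℤ) + 1) :=
    ⟨((s : ℤ) + 1) * c - 1 - m * x - y, by push_cast at h ⊢; linear_combination h⟩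
  have hz : (b : ℤ) ∣ ((z : ℤ) + 1) := hco.dvd_of_dvd_mul_left hdvd
  have hz' : b ∣ z + 1 := by exact_mod_cast hz
  obtain ⟨k, hk⟩ := hz'
  have hk1 : 1 ≤ k := by
    rcases Nat.eq_zero_or_pos k with rfl | h'
    · omega
    · exact h'
  refine ⟨k - 1, by rw [Nat.sub_add_cancel hk1]; exact hk, ?_⟩
  have hzz : (z : ℤ) + 1 = b * k := by exact_mod_cast hk
  have e : (b : ℤ) * ((m : ℤ) * x + c * ((k : ℤ) - 1) + 1 + y) = (b : ℤ) * (s * c) := by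
    push_cast at h
    linear_combination h - (c : ℤ) * hzz
  have e2 := mul_left_cancel₀ (show (b : ℤ) ≠ 0 by exact_mod_cast hb.ne') e
  have e3 : ((m * x + c * (k - 1) + 1 + y : ℕ) : ℤ) = ((s * c : ℕ) : ℤ) := by
    push_cast [Nat.cast_sub hk1]
    linarith [e2]
  exact_mod_cast e3

lemma key (b c m s : ℕ) (hb : 0 < b) (hc : 0 < c) (hm : 0 < m)
    (hbc : Nat.Coprime b c) :
    d3 (b * m) b c (((s : ℤ) + 1) * b * c - b - c) =
      ∑ j ∈ Finset.range (s + 1), ((j * c + m - 1) / m) := by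
  rw [← count_box m c s hm hc, d3]
  apply Nat.card_congr
  refine Equiv.ofBijective
    (fun p => ⟨(p.1.1, (p.1.2.2 + 1) / b - 1), ?_⟩) ⟨?_, ?_⟩
  · obtain ⟨⟨x, y, z⟩, hp⟩ := p
    obtain ⟨t, ht1, ht2⟩ := helper b c m s x y z hb hbc hp
    have e : (z + 1) / b - 1 = t := by rw [ht1, Nat.mul_div_cancel_left _ hb]; omega
    simpa [e] using (by omega : m * x + c * t + 1 ≤ s * c)
  · rintro ⟨⟨x1, y1, z1⟩, hp1⟩ ⟨⟨x2, y2, z2⟩, hp2⟩ hpq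
    obtain ⟨t1, ha1, ha2⟩ := helper b c m s x1 y1 z1 hb hbc hp1
    obtain ⟨t2, hb1, hb2⟩ := helper b c m s x2 y2 z2 hb hbc hp2
    have e1 : (z1 + 1) / b - 1 = t1 := by
      rw [ha1, Nat.mul_div_cancel_left _ hb]; omega
    have e2 : (z2 + 1) / b - 1 = t2 := by
      rw [hb1, Nat.mul_div_cancel_left _ hb]; omega
    simp only [Subtype.mk.injEq, Prod.mk.injEq, e1, e2] at hpq
    obtain ⟨hx, htt⟩ := hpq
    subst hx; subst htt
    simp only [Subtype.mk.injEq, Prod.mk.injEq]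
    exact ⟨trivial, by omega, by omega⟩
  · rintro ⟨⟨x, t⟩, hle⟩
    have h1 : 1 ≤ b * t + b := by
      have : 1 ≤ b := hb
      omega
    refine ⟨⟨(x, s * c - (m * x + c * t + 1), b * t + b - 1), ?_⟩, ?_⟩
    · push_cast [Nat.cast_sub hle, Nat.cast_sub h1]
      ring
    · apply Subtype.ext
      have e3 : b * t + b - 1 + 1 = b * (t + 1) := by
        have : b * (t + 1) = b * t + b := by ring
        omega
      simp only [Prod.mk.injEq]
      rw [e3, Nat.mul_div_cancel_left _ hb]
      simp

/-- The number of representations of `g(a₂/d₁, a₃/d₁; s) = (s+1)(a₂/d₁)(a₃/d₁) - a₂/d₁ - a₃/d₁`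
by `a₁, a₂/d₁, a₃/d₁` equals `∑_{j=0}^s ⌈j a₂ a₃/(a₁ d₁²)⌉`. -/
theorem stmt9 (a₁ a₂ a₃ : ℕ) (h₁ : 0 < a₁) (h₂ : 0 < a₂) (h₃ : 0 < a₃)
    (hgcd : Nat.gcd a₁ (Nat.gcd a₂ a₃) = 1)
    (d₁ : ℕ) (hd₁ : d₁ = Nat.gcd a₂ a₃)
    (hdvd : a₂ / d₁ ∣ a₁) (s : ℕ) :
    d3 a₁ (a₂ / d₁) (a₃ / d₁)
        (((s : ℤ) + 1) * (a₂ / d₁ : ℕ) * (a₃ / d₁ : ℕ) - (a₂ / d₁ : ℕ) - (a₃ / d₁ : ℕ)) =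
      ∑ j ∈ Finset.range (s + 1), (⌈(j * a₂ * a₃ : ℚ) / (a₁ * d₁ ^ 2)⌉).toNat := by
  have hgpos : 0 < Nat.gcd a₂ a₃ := Nat.gcd_pos_of_pos_left a₃ h₂
  have hd₁pos : 0 < d₁ := hd₁ ▸ hgpos
  set b := a₂ / d₁ with hbdef
  set c := a₃ / d₁ with hcdef
  set m := a₁ / b with hmdef
  have hb2 : d₁ * b = a₂ := Nat.mul_div_cancel' (hd₁ ▸ Nat.gcd_dvd_left a₂ a₃)
  have hc2 : d₁ * c = a₃ := Nat.mul_div_cancel' (hd₁ ▸ Nat.gcd_dvd_right a₂ a₃)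
  have ha1 : b * m = a₁ := Nat.mul_div_cancel' hdvd
  have hbpos : 0 < b := by
    rcases Nat.eq_zero_or_pos b with h0 | h; · rw [h0] at hb2; omega
    exact h
  have hcpos : 0 < c := by
    rcases Nat.eq_zero_or_pos c with h0 | h; · rw [h0] at hc2; omega
    exact h
  have hmpos : 0 < m := by
    rcases Nat.eq_zero_or_pos m with h0 | h; · rw [h0] at ha1; omega
    exact h
  have hbc : Nat.Coprime b c := by
    rw [hbdef, hcdef, hd₁]
    exact Nat.coprime_div_gcd_div_gcd hgpos
  rw [← ha1, key b c m s hbpos hcpos hmpos hbc]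
  apply Finset.sum_congr rfl
  intro j hj
  have heq : ((j : ℚ) * a₂ * a₃) / (((b * m : ℕ) : ℚ) * d₁ ^ 2) = ((j * c : ℕ) : ℚ) / m := by
    have e1 : (a₂ : ℚ) = (d₁ : ℚ) * b := by exact_mod_cast hb2.symm
    have e2 : (a₃ : ℚ) = (d₁ : ℚ) * c := by exact_mod_cast hc2.symm
    have hd : (d₁ : ℚ) ≠ 0 := by positivity
    have hbq : (b : ℚ) ≠ 0 := by
      have : (0:ℚ) < b := by exact_mod_cast hbpos
      positivity
    have hmq : (m : ℚ) ≠ 0 := by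
      have : (0:ℚ) < m := by exact_mod_cast hmpos
      positivity
    rw [e1, e2]
    push_cast
    field_simp
  rw [heq, ceil_nat_div (j * c) m hmpos]
  exact (Int.toNat_natCast _).symm
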